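/- arXiv:1109.1772 — 4 statements merged into one kernel-verified Lean document; each statement's English description precedes it below -/
import Mathlib

section
/- If a, b, c are pairwise coprime polynomials over ℂ, not all constant, satisfying a + b = c, then max{deg a, deg b, deg c} is strictly less than the number of distinct complex roots of the product abc. -/
open Polynomial UniqueFactorizationMonoid

lemma radical_natDegree_eq (p : ℂ[X]) (hp : p ≠ 0) :
    (radical p).natDegree = p.roots.toFinset.card := by
  classical
  have hmem : ∀ q ∈ primeFactors p, q.Monic ∧ q.natDegree = 1 ∧ q ∣ p := by
    intro q hq
    have h1 : q ∈ normalizedFactors p := by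
      exact mem_primeFactors.mp hq
    have hirr := irreducible_of_normalized_factor q h1
    have hmon : q.Monic := by
      have := normalize_normalized_factor q h1
      simpa [this] using monic_normalize (p := q) hirr.ne_zero
    have hdeg : q.natDegree = 1 :=
      natDegree_eq_of_degree_eq_some (IsAlgClosed.degree_eq_one_of_irreducible ℂ hirr)
    exact ⟨hmon, hdeg, dvd_of_mem_normalizedFactors h1⟩
  -- q = X - C r with r = -(q.coeff 0)
  have hform : ∀ q ∈ primeFactors p, q = X - C (-(q.coeff 0)) := by
    intro q hq
    obtain ⟨hmon, hdeg, -⟩ := hmem q hq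
    have := Polynomial.eq_X_add_C_of_natDegree_le_one (hdeg.le)
    rw [show q.coeff 1 = 1 from hdeg ▸ hmon.coeff_natDegree] at this
    simpa [sub_eq_add_neg] using this
  -- degree count
  have h1 : (radical p).natDegree = (primeFactors p).card := by
    rw [radical, show (primeFactors p).prod id = ∏ q ∈ primeFactors p, q from rfl,
      Polynomial.natDegree_prod _ _ (fun q hq => (hmem q hq).1.ne_zero)]
    rw [Finset.sum_congr rfl (fun q hq => (hmem q hq).2.1), Finset.sum_const, smul_eq_mul, mul_one]
  rw [h1]
  apply Finset.card_bij (fun q _ => -(q.coeff 0))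
  · intro q hq
    obtain ⟨hmon, hdeg, hdvd⟩ := hmem q hq
    rw [Multiset.mem_toFinset, mem_roots hp]
    have : q.IsRoot (-(q.coeff 0)) := by
      rw [hform q hq]; simp [IsRoot]
    exact IsRoot.dvd (by simpa [← hform q hq] using this) hdvd
  · intro q1 h1 q2 h2 h
    rw [hform q1 h1, hform q2 h2, h]
  · intro r hr
    rw [Multiset.mem_toFinset, mem_roots hp] at hr
    have hdvd : X - C r ∣ p := dvd_iff_isRoot.mpr hr
    obtain ⟨q, hq, hassoc⟩ := exists_mem_normalizedFactors_of_dvd hp (irreducible_X_sub_C r) hdvd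
    have hq' : q ∈ primeFactors p := by
      exact mem_primeFactors.mpr hq
    have hqmon : q.Monic := (hmem q hq').1
    have : X - C r = q := eq_of_monic_of_associated (monic_X_sub_C r) hqmon hassoc
    exact ⟨q, hq', by simp [← this]⟩

/-- Mason–Stothers theorem: if `a`, `b`, `c` are pairwise coprime polynomials over `ℂ`,
not all constant, with `a + b = c`, then `max {deg a, deg b, deg c}` is strictly less
than the number of distinct complex roots of `a * b * c`. -/
theorem mason_stothers (a b c : Polynomial ℂ)
    (hab : IsCoprime a b) (hbc : IsCoprime b c) (hac : IsCoprime a c)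
    (habc : a + b = c)
    (hconst : ¬(a.natDegree = 0 ∧ b.natDegree = 0 ∧ c.natDegree = 0)) :
    max (max a.natDegree b.natDegree) c.natDegree < (a * b * c).roots.toFinset.card := by
  classical
  have ha : a ≠ 0 := by
    rintro rfl
    exact hconst ⟨natDegree_zero, natDegree_eq_zero_of_isUnit (isCoprime_zero_left.mp hab),
      by rw [← habc, zero_add]; exact natDegree_eq_zero_of_isUnit (isCoprime_zero_left.mp hab)⟩
  have hb : b ≠ 0 := by
    rintro rfl
    exact hconst ⟨natDegree_eq_zero_of_isUnit (isCoprime_zero_right.mp hab), natDegree_zero,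
      by rw [← habc, add_zero]; exact natDegree_eq_zero_of_isUnit (isCoprime_zero_right.mp hab)⟩
  have hc : c ≠ 0 := by
    rintro rfl
    have hbu : b.natDegree = 0 := natDegree_eq_zero_of_isUnit (isCoprime_zero_right.mp hbc)
    have hau : a = -b := by linear_combination habc
    exact hconst ⟨by rw [hau, natDegree_neg]; exact hbu, hbu, natDegree_zero⟩
  have habc0 : a * b * c ≠ 0 := mul_ne_zero (mul_ne_zero ha hb) hc
  have hsum : a + b + -c = 0 := by rw [habc]; ring
  have := Polynomial.abc ha hb (neg_ne_zero.mpr hc) hab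
    hsum
  rcases this with ⟨h1, h2, h3⟩ | ⟨da, db, dc⟩
  · have hrad : (radical (a * b * -c)).natDegree
        = (a * b * c).roots.toFinset.card := by
      rw [show a * b * -c = -(a * b * c) by ring, radical_eq_of_associated (Associated.rfl.neg_left),
        radical_natDegree_eq _ habc0]
    rw [hrad] at h1 h2 h3
    rw [natDegree_neg] at h3
    exact max_lt (max_lt h1 h2) h3
  · exact absurd ⟨natDegree_eq_zero_of_derivative_eq_zero da,
      natDegree_eq_zero_of_derivative_eq_zero db,
      by rw [← natDegree_neg]; exact natDegree_eq_zero_of_derivative_eq_zero dc⟩ hconst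
end

section
/- There are no polynomials P, Q, R over ℂ, not all constant, with P, Q, R pairwise coprime, satisfying Pⁿ + Qⁿ = Rⁿ for any integer n ≥ 3. -/
open Polynomial UniqueFactorizationMonoid UniqueFactorizationDomain

theorem aux_deriv (n : ℕ) (hn : (n:ℂ) ≠ 0) (p : Polynomial ℂ) (hp : p ≠ 0)
    (h : Polynomial.derivative (p ^ n) = 0) : p.natDegree = 0 := by
  rw [Polynomial.derivative_pow] at h
  rcases mul_eq_zero.mp h with h | h
  · rcases mul_eq_zero.mp h with h | h
    · exact absurd (by simpa using h) hn
    · exact absurd h (pow_ne_zero _ hp)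
  · exact Polynomial.natDegree_eq_zero_of_derivative_eq_zero h

/-- Fermat's Last Theorem for polynomials over `ℂ`: there are no pairwise coprime
polynomials `P, Q, R`, not all constant, with `P^n + Q^n = R^n` for `n ≥ 3`. -/
theorem flt_polynomials (n : ℕ) (hn : 3 ≤ n) (P Q R : Polynomial ℂ)
    (hPQ : IsCoprime P Q) (hQR : IsCoprime Q R) (hPR : IsCoprime P R)
    (hconst : ¬(P.natDegree = 0 ∧ Q.natDegree = 0 ∧ R.natDegree = 0)) :
    P ^ n + Q ^ n ≠ R ^ n := by
  intro heq
  have hn0 : 0 < n := by omega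
  classical
  -- nonzero cases
  by_cases hP : P = 0
  · subst hP
    rw [isCoprime_zero_left] at hPQ hPR
    exact hconst ⟨natDegree_zero, natDegree_eq_zero_of_isUnit hPQ,
      natDegree_eq_zero_of_isUnit hPR⟩
  by_cases hQ : Q = 0
  · subst hQ
    rw [isCoprime_zero_left] at hQR
    rw [isCoprime_comm, isCoprime_zero_left] at hPQ
    exact hconst ⟨natDegree_eq_zero_of_isUnit hPQ, natDegree_zero,
      natDegree_eq_zero_of_isUnit hQR⟩
  by_cases hR : R = 0
  · subst hR
    rw [isCoprime_comm, isCoprime_zero_left] at hQR hPR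
    exact hconst ⟨natDegree_eq_zero_of_isUnit hPR,
      natDegree_eq_zero_of_isUnit hQR, natDegree_zero⟩
  -- apply the polynomial ABC theorem
  have ha : P ^ n ≠ 0 := pow_ne_zero n hP
  have hb : Q ^ n ≠ 0 := pow_ne_zero n hQ
  have hc : -R ^ n ≠ 0 := neg_ne_zero.mpr (pow_ne_zero n hR)
  have hab : IsCoprime (P ^ n) (Q ^ n) := hPQ.pow
  have hbc : IsCoprime (Q ^ n) (-R ^ n) := hQR.pow.neg_right
  have hca : IsCoprime (-R ^ n) (P ^ n) := (hPR.pow.neg_right).symm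
  have hsum : P ^ n + Q ^ n + -R ^ n = 0 := by rw [heq]; ring
  rcases Polynomial.abc ha hb hc hab hsum with h | ⟨h1, h2, h3⟩
  · -- degree bounds case
    have hrad : radical (P ^ n * Q ^ n * -R ^ n) = radical (P * Q * R) := by
      rw [show P ^ n * Q ^ n * -R ^ n = -(P^n * Q^n * R^n) by ring, radical_neg,
        radical_mul (IsCoprime.mul_left hPR.pow hQR.pow).isRelPrime, radical_mul hPQ.pow.isRelPrime,
        radical_pow P hn0.ne', radical_pow Q hn0.ne', radical_pow R hn0.ne',
        ← radical_mul hPQ.isRelPrime, ← radical_mul (hPR.mul_left hQR).isRelPrime]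
    rw [hrad] at h
    obtain ⟨h1, h2, h3⟩ := h
    have hPQR : P * Q * R ≠ 0 := mul_ne_zero (mul_ne_zero hP hQ) hR
    have hle : (radical (P * Q * R)).natDegree ≤ P.natDegree + Q.natDegree + R.natDegree := by
      have := Polynomial.natDegree_le_of_dvd (radical_dvd_self (a := P * Q * R)) hPQR
      rwa [natDegree_mul (mul_ne_zero hP hQ) hR, natDegree_mul hP hQ] at this
    rw [natDegree_pow] at h1 h2
    rw [natDegree_neg, natDegree_pow] at h3
    have hkey : n * P.natDegree + n * Q.natDegree + n * R.natDegree + 3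
        ≤ 3 * (P.natDegree + Q.natDegree + R.natDegree) := by omega
    have h3n : 3 * (P.natDegree + Q.natDegree + R.natDegree)
        ≤ n * (P.natDegree + Q.natDegree + R.natDegree) :=
      Nat.mul_le_mul_right _ hn
    rw [Nat.mul_add n, Nat.mul_add n] at h3n
    omega
  · -- derivative zero case: all constant in char 0
    have hnC : (n : ℂ) ≠ 0 := Nat.cast_ne_zero.mpr (by omega)
    rw [derivative_neg, neg_eq_zero] at h3
    exact hconst ⟨aux_deriv n hnC P hP h1, aux_deriv n hnC Q hQ h2, aux_deriv n hnC R hR h3⟩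
end

section
/- Polynomials p₀, …, pₙ over ℂ are linearly dependent over ℂ if and only if their Wronskian W(p₀,…,pₙ) is the zero polynomial. -/
open Polynomial Matrix Finset

private lemma coeff_prod_eq {ι : Type*} (s : Finset ι) (f : ι → Polynomial ℂ) (d : ι → ℕ)
    (h : ∀ i ∈ s, (f i).natDegree ≤ d i) :
    (∏ i ∈ s, f i).coeff (∑ i ∈ s, d i) = ∏ i ∈ s, (f i).coeff (d i) := by
  induction s using Finset.cons_induction with
  | empty => simp
  | cons a s ha ih =>
    rw [Finset.prod_cons, Finset.sum_cons,
      Polynomial.coeff_mul_add_eq_of_natDegree_le (h a (Finset.mem_cons_self a s))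
        ((Polynomial.natDegree_prod_le _ _).trans (Finset.sum_le_sum fun i hi => h i (Finset.mem_cons_of_mem hi))),
      ih fun i hi => h i (Finset.mem_cons_of_mem hi), Finset.prod_cons]

private lemma cast_descFactorial_eq (d k : ℕ) :
    ((d.descFactorial k : ℕ) : ℂ) = ∏ t ∈ Finset.range k, ((d : ℂ) - (t : ℂ)) := by
  rcases le_or_gt k d with h | h
  · rw [Nat.descFactorial_eq_prod_range, Nat.cast_prod]
    refine Finset.prod_congr rfl fun t ht => ?_
    rw [Nat.cast_sub ((Finset.mem_range.mp ht).le.trans h)]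
  · rw [Nat.descFactorial_eq_zero_iff_lt.mpr h, Nat.cast_zero]
    refine (Finset.prod_eq_zero (Finset.mem_range.mpr h) ?_).symm
    simp

private lemma det_descFactorial_ne_zero (m : ℕ) (d : Fin m → ℕ) (hd : Function.Injective d) :
    Matrix.det (Matrix.of fun i j : Fin m => ((d i).descFactorial (j : ℕ) : ℂ)) ≠ 0 := by
  set P : Fin m → Polynomial ℂ := fun j => ∏ t ∈ Finset.range (j : ℕ), (X - C (t : ℂ)) with hP
  have hmonic : ∀ j : Fin m, (P j).Monic := fun j =>
    monic_prod_of_monic _ _ fun t _ => monic_X_sub_C _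
  have hdeg : ∀ j : Fin m, (P j).natDegree = (j : ℕ) := by
    intro j
    rw [hP, natDegree_prod _ _ fun t _ => X_sub_C_ne_zero _]
    simp only [natDegree_X_sub_C]
    rw [Finset.sum_const, Finset.card_range, smul_eq_mul, mul_one]
  have hvdm := Matrix.det_eval_matrixOfPolynomials_eq_det_vandermonde
      (fun i : Fin m => ((d i : ℕ) : ℂ)) P hdeg hmonic
  have hentry : (Matrix.of fun i j : Fin m => (P j).eval ((d i : ℕ) : ℂ))
      = Matrix.of fun i j : Fin m => ((d i).descFactorial (j : ℕ) : ℂ) := by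
    ext i j
    simp only [Matrix.of_apply, hP, eval_prod, eval_sub, eval_X, eval_C]
    rw [cast_descFactorial_eq]
  rw [hentry] at hvdm
  rw [← hvdm]
  exact Matrix.det_vandermonde_ne_zero_iff.mpr
    (fun a b hab => hd (Nat.cast_injective hab))

private lemma det_wronskian_ne_zero_of_inj (m : ℕ) (p : Fin m → Polynomial ℂ)
    (h0 : ∀ j, p j ≠ 0)
    (hinj : Function.Injective fun j => (p j).natDegree) :
    Matrix.det (Matrix.of fun i j : Fin m => (Polynomial.derivative^[(i : ℕ)] (p j))) ≠ 0 := by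
  set d : Fin m → ℕ := fun j => (p j).natDegree with hd
  set D : ℕ := (∑ j, d j) - (∑ j : Fin m, (j : ℕ)) with hD
  have key : ∀ σ : Equiv.Perm (Fin m),
      (∏ j, Polynomial.derivative^[(σ j : ℕ)] (p j)).coeff D
        = ∏ j, ((d j).descFactorial (σ j : ℕ) : ℂ) * (p j).leadingCoeff := by
    intro σ
    by_cases hσ : ∀ j, (σ j : ℕ) ≤ d j
    · have hsum : ∑ j, (d j - (σ j : ℕ)) = D := by
        rw [Finset.sum_tsub_distrib _ fun j _ => hσ j, hD]
        congr 1
        exact (Equiv.sum_comp σ fun j : Fin m => (j : ℕ))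
      rw [← hsum, coeff_prod_eq Finset.univ _ _
        (fun j _ => Polynomial.natDegree_iterate_derivative (p j) _)]
      refine Finset.prod_congr rfl fun j _ => ?_
      rw [Polynomial.coeff_iterate_derivative, Nat.sub_add_cancel (hσ j)]
      rw [nsmul_eq_mul, Polynomial.coeff_natDegree]
    · push_neg at hσ
      obtain ⟨j, hj⟩ := hσ
      rw [Finset.prod_eq_zero (Finset.mem_univ j)
        (Polynomial.iterate_derivative_eq_zero hj), Polynomial.coeff_zero, eq_comm]
      refine Finset.prod_eq_zero (Finset.mem_univ j) ?_
      rw [Nat.descFactorial_eq_zero_iff_lt.mpr hj, Nat.cast_zero, zero_mul]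
  have hcoeff : (Matrix.det
        (Matrix.of fun i j : Fin m => (Polynomial.derivative^[(i : ℕ)] (p j)))).coeff D
      = Matrix.det (Matrix.of fun i j : Fin m =>
          ((d j).descFactorial (i : ℕ) : ℂ) * (p j).leadingCoeff) := by
    rw [Matrix.det_apply', Matrix.det_apply', Polynomial.finset_sum_coeff]
    refine Finset.sum_congr rfl fun σ _ => ?_
    simp only [Matrix.of_apply]
    rw [Polynomial.coeff_intCast_mul, key σ]
  have hne : Matrix.det (Matrix.of fun i j : Fin m =>
      ((d j).descFactorial (i : ℕ) : ℂ) * (p j).leadingCoeff) ≠ 0 := by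
    rw [← Matrix.det_transpose]
    have ht : (Matrix.of fun i j : Fin m =>
        ((d j).descFactorial (i : ℕ) : ℂ) * (p j).leadingCoeff)ᵀ
        = Matrix.of fun i j : Fin m =>
            (p i).leadingCoeff * (Matrix.of fun i j : Fin m =>
              ((d i).descFactorial (j : ℕ) : ℂ)) i j := by
      ext i j
      simp [Matrix.transpose_apply, mul_comm]
    rw [ht, Matrix.det_mul_column]
    refine mul_ne_zero (Finset.prod_ne_zero_iff.mpr fun i _ =>
      Polynomial.leadingCoeff_ne_zero.mpr (h0 i)) ?_
    exact det_descFactorial_ne_zero m d hinj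
  intro hzero
  apply hne
  rw [← hcoeff, hzero, Polynomial.coeff_zero]

private lemma sum_update_eq {M : Type*} [AddCommGroup M] {m : ℕ} (f : Fin m → M) (k : Fin m)
    (v : M) : ∑ i, Function.update f k v i = ∑ i, f i - f k + v := by
  rw [Finset.sum_update_of_mem (Finset.mem_univ k), ← Finset.erase_eq,
    Finset.sum_erase_eq_sub (Finset.mem_univ k)]
  abel

private lemma det_wronskian_ne_zero (m : ℕ) :
    ∀ N (p : Fin m → Polynomial ℂ), (∑ j, (p j).natDegree) ≤ N → LinearIndependent ℂ p →
      Matrix.det (Matrix.of fun i j : Fin m => (Polynomial.derivative^[(i : ℕ)] (p j))) ≠ 0 := by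
  intro N
  induction N using Nat.strong_induction_on with
  | _ N ih =>
    intro p hN hp
    have h0 : ∀ j, p j ≠ 0 := fun j => hp.ne_zero j
    by_cases hinj : Function.Injective fun j => (p j).natDegree
    · exact det_wronskian_ne_zero_of_inj m p h0 hinj
    · simp only [Function.Injective, not_forall] at hinj
      obtain ⟨k, j, hdeg, hkj⟩ := hinj
      have hlcj : (p j).leadingCoeff ≠ 0 := Polynomial.leadingCoeff_ne_zero.mpr (h0 j)
      have hlck : (p k).leadingCoeff ≠ 0 := Polynomial.leadingCoeff_ne_zero.mpr (h0 k)
      set c : ℂ := (p k).leadingCoeff / (p j).leadingCoeff with hc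
      have hcne : c ≠ 0 := div_ne_zero hlck hlcj
      set q : Fin m → Polynomial ℂ := Function.update p k (p k - c • p j) with hq
      have hqk : q k = p k - c • p j := Function.update_self _ _ _
      have hqne : ∀ i, i ≠ k → q i = p i := fun i hi => Function.update_of_ne hi _ _
      -- key sum computation
      have hkey : ∀ g : Fin m → ℂ,
          ∑ i, g i • q i = ∑ i, g i • p i - (g k * c) • p j := by
        intro g
        have h1 : (fun i => g i • q i)
            = Function.update (fun i => g i • p i) k (g k • (p k - c • p j)) := by
          funext i
          by_cases hi : i = k
          · subst hi; rw [Function.update_self, hqk]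
          · rw [Function.update_of_ne hi, hqne i hi]
        rw [h1, sum_update_eq]
        rw [smul_sub, smul_smul]
        abel
      have hkey' : ∀ g : Fin m → ℂ,
          ∑ i, Function.update g j (g j - g k * c) i • p i
            = ∑ i, g i • p i - (g k * c) • p j := by
        intro g
        have h1 : (fun i => Function.update g j (g j - g k * c) i • p i)
            = Function.update (fun i => g i • p i) j ((g j - g k * c) • p j) := by
          funext i
          by_cases hi : i = j
          · subst hi; rw [Function.update_self, Function.update_self]
          · rw [Function.update_of_ne hi, Function.update_of_ne hi]
        rw [h1, sum_update_eq, sub_smul]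
        abel
      have hqli : LinearIndependent ℂ q := by
        rw [Fintype.linearIndependent_iff] at hp ⊢
        intro g hg
        have hg' : ∀ i, Function.update g j (g j - g k * c) i = 0 :=
          hp _ (by rw [hkey' g, ← hkey g, hg])
        have hgk : g k = 0 := by
          have := hg' k
          rwa [Function.update_of_ne hkj] at this
        intro i
        by_cases hi : i = j
        · subst hi
          have := hg' i
          rwa [Function.update_self, hgk, zero_mul, sub_zero] at this
        · have := hg' i
          rwa [Function.update_of_ne hi] at this
      have hqk0 : q k ≠ 0 := hqli.ne_zero k
      have hdlt : (q k).natDegree < (p k).natDegree := by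
        refine Polynomial.natDegree_lt_natDegree hqk0 ?_
        rw [hqk]
        refine Polynomial.degree_sub_lt ?_ (h0 k) ?_
        · rw [smul_eq_C_mul, Polynomial.degree_C_mul hcne,
            Polynomial.degree_eq_natDegree (h0 k), Polynomial.degree_eq_natDegree (h0 j), hdeg]
        · rw [smul_eq_C_mul, Polynomial.leadingCoeff_mul, Polynomial.leadingCoeff_C, hc,
            div_mul_cancel₀ _ hlcj]
      have hsumlt : ∑ i, (q i).natDegree < ∑ i, (p i).natDegree := by
        refine Finset.sum_lt_sum (fun i _ => ?_) ⟨k, Finset.mem_univ k, hdlt⟩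
        by_cases hi : i = k
        · subst hi; exact hdlt.le
        · rw [hqne i hi]
      have hq_ne := ih (∑ i, (q i).natDegree) (lt_of_lt_of_le hsumlt hN) q le_rfl hqli
      -- relate the two determinants
      have hWq : (Matrix.of fun i j' : Fin m => (Polynomial.derivative^[(i : ℕ)] (q j')))
          = Matrix.updateCol
              (Matrix.of fun i j' : Fin m => (Polynomial.derivative^[(i : ℕ)] (p j'))) k
              (fun i => (Matrix.of fun i j' : Fin m =>
                  (Polynomial.derivative^[(i : ℕ)] (p j'))) i k
                + (-(C c)) • (Matrix.of fun i j' : Fin m =>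
                  (Polynomial.derivative^[(i : ℕ)] (p j'))) i j) := by
        refine Matrix.ext fun i l => ?_
        rw [Matrix.updateCol_apply]
        by_cases hl : l = k
        · rw [if_pos hl, hl, Matrix.of_apply, Matrix.of_apply, Matrix.of_apply, hqk,
            Polynomial.iterate_derivative_sub, Polynomial.iterate_derivative_smul,
            smul_eq_C_mul, smul_eq_mul]
          ring
        · rw [if_neg hl, Matrix.of_apply, Matrix.of_apply, hqne l hl]
      rw [hWq, Matrix.det_updateCol_add_smul_self _ hkj] at hq_ne
      exact hq_ne

/-- Polynomials `p₀, …, pₙ` over `ℂ` are linearly dependent over `ℂ` iff their Wronskian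
`det (pⱼ^{(i)})_{0 ≤ i,j ≤ n}` is the zero polynomial. -/
theorem not_linearIndependent_iff_wronskian_eq_zero (n : ℕ) (p : Fin (n + 1) → Polynomial ℂ) :
    ¬ LinearIndependent ℂ p ↔
      Matrix.det
        (Matrix.of fun i j : Fin (n + 1) => (Polynomial.derivative^[(i : ℕ)] (p j))) = 0 := by
  constructor
  · intro h
    rw [Fintype.not_linearIndependent_iff] at h
    obtain ⟨g, hg, i₀, hi₀⟩ := h
    rw [← Matrix.exists_mulVec_eq_zero_iff]
    refine ⟨fun j => C (g j), ?_, ?_⟩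
    · intro hzero
      apply hi₀
      have := congrFun hzero i₀
      simpa using this
    · funext i
      show ∑ j, (Matrix.of fun i j : Fin (n + 1) =>
          (Polynomial.derivative^[(i : ℕ)] (p j))) i j * C (g j) = 0
      have : ∀ j, (Matrix.of fun i j : Fin (n + 1) =>
            (Polynomial.derivative^[(i : ℕ)] (p j))) i j * C (g j)
          = Polynomial.derivative^[(i : ℕ)] (g j • p j) := by
        intro j
        rw [Matrix.of_apply, Polynomial.iterate_derivative_smul, smul_eq_C_mul]
        ring
      rw [Finset.sum_congr rfl fun j _ => this j]
      simp_rw [← Module.End.pow_apply]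
      rw [← map_sum, hg, map_zero]
  · intro hdet hind
    exact det_wronskian_ne_zero (n + 1) (∑ j, (p j).natDegree) p le_rfl hind hdet
end

section
/- Let f₀,…,fₙ be analytic functions on a domain, fₙ₊₁ = f₀ + ⋯ + fₙ, and W their Wronskian. If some fⱼ (0 ≤ j ≤ n+1) vanishes to order k > n at a point z₀, then W vanishes to order at least k − n at z₀. -/
open Filter Topology

private lemma analyticAt_deriv' {f : ℂ → ℂ} {x : ℂ} (h : AnalyticAt ℂ f x) :
    AnalyticAt ℂ (deriv f) x := by
  have hs : AnalyticOnNhd ℂ f {x} := fun y hy => by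
    rw [Set.mem_singleton_iff] at hy; rwa [hy]
  exact hs.deriv x rfl

private lemma iteratedDeriv_zero_fun (l : ℕ) :
    iteratedDeriv l (fun _ : ℂ => (0 : ℂ)) = fun _ => 0 := by
  induction l with
  | zero => simp [iteratedDeriv_zero]
  | succ l ih => rw [iteratedDeriv_succ, ih]; funext z; simp


private lemma analyticAt_iteratedDeriv' {f : ℂ → ℂ} {x : ℂ} (h : AnalyticAt ℂ f x) (m : ℕ) :
    AnalyticAt ℂ (iteratedDeriv m f) x := by
  induction m with
  | zero => simpa [iteratedDeriv_zero] using h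
  | succ m ih => rw [iteratedDeriv_succ]; exact analyticAt_deriv' ih

private lemma iteratedDeriv_iteratedDeriv' (m p : ℕ) (f : ℂ → ℂ) :
    iteratedDeriv m (iteratedDeriv p f) = iteratedDeriv (m + p) f := by
  simp only [iteratedDeriv_eq_iterate]
  exact (Function.iterate_add_apply deriv m p f).symm

private lemma iteratedDeriv_add_analytic {f g : ℂ → ℂ} {x : ℂ} (hf : AnalyticAt ℂ f x)
    (hg : AnalyticAt ℂ g x) (l : ℕ) :
    iteratedDeriv l (fun z => f z + g z) x = iteratedDeriv l f x + iteratedDeriv l g x := by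
  induction l generalizing f g with
  | zero => simp
  | succ l ih =>
    have E : deriv (fun z => f z + g z) =ᶠ[𝓝 x] fun z => deriv f z + deriv g z := by
      filter_upwards [hf.eventually_analyticAt, hg.eventually_analyticAt] with z hf' hg'
      exact deriv_add hf'.differentiableAt hg'.differentiableAt
    rw [iteratedDeriv_succ', iteratedDeriv_succ', iteratedDeriv_succ',
      E.iteratedDeriv_eq]
    exact ih (analyticAt_deriv' hf) (analyticAt_deriv' hg)

private lemma analyticAt_finset_sum {ι : Type*} (s : Finset ι) (f : ι → ℂ → ℂ) {x : ℂ}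
    (hf : ∀ i ∈ s, AnalyticAt ℂ (f i) x) :
    AnalyticAt ℂ (fun z => ∑ i ∈ s, f i z) x := by
  induction s using Finset.cons_induction with
  | empty => simpa using analyticAt_const
  | cons a s ha ih =>
    simp only [Finset.sum_cons]
    exact (hf a (Finset.mem_cons_self a s)).add (ih fun i hi => hf i (Finset.mem_cons_of_mem hi))

private lemma iteratedDeriv_sum_analytic {ι : Type*} (s : Finset ι) (f : ι → ℂ → ℂ) {x : ℂ}
    (hf : ∀ i ∈ s, AnalyticAt ℂ (f i) x) (l : ℕ) :
    iteratedDeriv l (fun z => ∑ i ∈ s, f i z) x = ∑ i ∈ s, iteratedDeriv l (f i) x := by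
  induction s using Finset.cons_induction with
  | empty =>
    simp only [Finset.sum_empty, iteratedDeriv_zero_fun]
  | cons a s ha ih =>
    simp only [Finset.sum_cons]
    rw [iteratedDeriv_add_analytic (hf a (Finset.mem_cons_self a s))
      (analyticAt_finset_sum s f fun i hi => hf i (Finset.mem_cons_of_mem hi)),
      ih fun i hi => hf i (Finset.mem_cons_of_mem hi)]

private lemma analyticAt_finset_prod {ι : Type*} (s : Finset ι) (f : ι → ℂ → ℂ) {x : ℂ}
    (hf : ∀ i ∈ s, AnalyticAt ℂ (f i) x) :
    AnalyticAt ℂ (fun z => ∏ i ∈ s, f i z) x := by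
  induction s using Finset.cons_induction with
  | empty => simpa using analyticAt_const
  | cons a s ha ih =>
    simp only [Finset.prod_cons]
    exact (hf a (Finset.mem_cons_self a s)).mul (ih fun i hi => hf i (Finset.mem_cons_of_mem hi))

private lemma iteratedDeriv_const_mul_analytic {f : ℂ → ℂ} {x : ℂ} (hf : AnalyticAt ℂ f x)
    (c : ℂ) (l : ℕ) : iteratedDeriv l (fun z => c * f z) x = c * iteratedDeriv l f x := by
  induction l generalizing f with
  | zero => simp
  | succ l ih =>
    have E : deriv (fun z => c * f z) =ᶠ[𝓝 x] fun z => c * deriv f z := by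
      filter_upwards [hf.eventually_analyticAt] with z hf'
      exact deriv_const_mul c hf'.differentiableAt
    rw [iteratedDeriv_succ', E.iteratedDeriv_eq, iteratedDeriv_succ']
    exact ih (analyticAt_deriv' hf)

private lemma vanish_mul {g h : ℂ → ℂ} {x : ℂ} {k : ℕ} (hg : AnalyticAt ℂ g x)
    (hh : AnalyticAt ℂ h x) (hv : ∀ l < k, iteratedDeriv l g x = 0) :
    ∀ l < k, iteratedDeriv l (fun z => g z * h z) x = 0 := by
  induction k generalizing g h with
  | zero => intro l hl; omega
  | succ k ih =>
    intro l hl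
    match l with
    | 0 =>
      have h0 := hv 0 (by omega)
      simp only [iteratedDeriv_zero] at h0 ⊢
      simp [h0]
    | l + 1 =>
      have E : deriv (fun z => g z * h z) =ᶠ[𝓝 x]
          fun z => deriv g z * h z + g z * deriv h z := by
        filter_upwards [hg.eventually_analyticAt, hh.eventually_analyticAt] with z hg' hh'
        exact deriv_mul hg'.differentiableAt hh'.differentiableAt
      rw [iteratedDeriv_succ', E.iteratedDeriv_eq,
        iteratedDeriv_add_analytic (f := fun z => deriv g z * h z) (g := fun z => g z * deriv h z)
          ((analyticAt_deriv' hg).mul hh) (hg.mul (analyticAt_deriv' hh))]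
      have h1 : iteratedDeriv l (fun z => deriv g z * h z) x = 0 := by
        refine ih (analyticAt_deriv' hg) hh (fun m hm => ?_) l (by omega)
        have := hv (m + 1) (by omega)
        rwa [iteratedDeriv_succ'] at this
      have h2 : iteratedDeriv l (fun z => g z * deriv h z) x = 0 :=
        ih hg (analyticAt_deriv' hh) (fun m hm => hv m (by omega)) l (by omega)
      rw [h1, h2, add_zero]

private lemma wronskian_key (n k : ℕ) (hk : n < k) (g : Fin (n + 1) → ℂ → ℂ) (z₀ : ℂ)
    (hg : ∀ j, AnalyticAt ℂ (g j) z₀) (j₀ : Fin (n + 1))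
    (hv : ∀ l < k, iteratedDeriv l (g j₀) z₀ = 0) :
    ∀ l < k - n, iteratedDeriv l (fun w => Matrix.det
      (Matrix.of fun i j : Fin (n + 1) => iteratedDeriv (i : ℕ) (g j) w)) z₀ = 0 := by
  intro l hl
  have hdet : (fun w => Matrix.det
      (Matrix.of fun i j : Fin (n + 1) => iteratedDeriv (i : ℕ) (g j) w))
      = fun w => ∑ σ : Equiv.Perm (Fin (n + 1)),
        ((Equiv.Perm.sign σ : ℤ) : ℂ) * ∏ i, iteratedDeriv ((σ i : Fin (n+1)) : ℕ) (g i) w := by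
    funext w
    rw [Matrix.det_apply]
    refine Finset.sum_congr rfl fun σ _ => ?_
    rw [Units.smul_def, zsmul_eq_mul]
    rfl
  rw [hdet]
  have hterm_an : ∀ σ : Equiv.Perm (Fin (n + 1)),
      AnalyticAt ℂ (fun w => ∏ i, iteratedDeriv ((σ i : Fin (n+1)) : ℕ) (g i) w) z₀ :=
    fun σ => analyticAt_finset_prod _ _ fun i _ => analyticAt_iteratedDeriv' (hg i) _
  rw [iteratedDeriv_sum_analytic _ (fun σ w => ((Equiv.Perm.sign σ : ℤ) : ℂ) *
    ∏ i, iteratedDeriv ((σ i : Fin (n+1)) : ℕ) (g i) w) (fun σ _ => analyticAt_const.mul (hterm_an σ))]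
  refine Finset.sum_eq_zero fun σ _ => ?_
  rw [iteratedDeriv_const_mul_analytic (hterm_an σ)]
  have hsplit : (fun w => ∏ i, iteratedDeriv ((σ i : Fin (n+1)) : ℕ) (g i) w)
      = fun w => iteratedDeriv ((σ j₀ : Fin (n+1)) : ℕ) (g j₀) w *
        ∏ i ∈ Finset.univ.erase j₀, iteratedDeriv ((σ i : Fin (n+1)) : ℕ) (g i) w := by
    funext w
    exact (Finset.mul_prod_erase _ _ (Finset.mem_univ j₀)).symm
  rw [hsplit]
  have hb : ((σ j₀ : Fin (n+1)) : ℕ) ≤ n := Fin.is_le _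
  have hz : iteratedDeriv l (fun w => iteratedDeriv ((σ j₀ : Fin (n+1)) : ℕ) (g j₀) w *
      ∏ i ∈ Finset.univ.erase j₀, iteratedDeriv ((σ i : Fin (n+1)) : ℕ) (g i) w) z₀ = 0 := by
    refine vanish_mul (k := k - ((σ j₀ : Fin (n+1)) : ℕ))
      (analyticAt_iteratedDeriv' (hg j₀) _)
      (analyticAt_finset_prod _ _ fun i _ => analyticAt_iteratedDeriv' (hg i) _)
      (fun m hm => ?_) l (by omega)
    rw [iteratedDeriv_iteratedDeriv']
    exact hv _ (by omega)
  rw [hz, mul_zero]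

/-- Let `f₀, …, fₙ` be analytic (at `z₀`), `fₙ₊₁ = f₀ + ⋯ + fₙ`, and `W` their Wronskian.
If some `fⱼ` (`0 ≤ j ≤ n+1`) vanishes to order `k > n` at `z₀`, then `W` vanishes to order
at least `k − n` at `z₀`. -/
theorem wronskian_vanishing_order (n : ℕ) (f : Fin (n + 1) → ℂ → ℂ) (z₀ : ℂ)
    (hf : ∀ j, AnalyticAt ℂ (f j) z₀) (k : ℕ) (hk : n < k)
    (hvanish : (∃ j : Fin (n + 1), ∀ l < k, iteratedDeriv l (f j) z₀ = 0) ∨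
      (∀ l < k, iteratedDeriv l (fun w => ∑ j, f j w) z₀ = 0)) :
    ∀ l < k - n,
      iteratedDeriv l (fun w => Matrix.det
        (Matrix.of fun i j : Fin (n + 1) => iteratedDeriv (i : ℕ) (f j) w)) z₀ = 0 := by
  rcases hvanish with ⟨j, hj⟩ | hsum
  · exact wronskian_key n k hk f z₀ hf j hj
  · -- replace column 0 by the sum of all columns
    set F : ℂ → ℂ := fun w => ∑ j, f j w with hF
    set g : Fin (n + 1) → ℂ → ℂ := Function.update f 0 F with hgdef
    have hFan : AnalyticAt ℂ F z₀ := analyticAt_finset_sum _ _ fun j _ => hf j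
    have hgan : ∀ j, AnalyticAt ℂ (g j) z₀ := by
      intro j
      by_cases hj : j = 0
      · subst hj; simpa [hgdef, Function.update_self] using hFan
      · simpa [hgdef, Function.update_of_ne hj] using hf j
    have hg0 : ∀ l < k, iteratedDeriv l (g 0) z₀ = 0 := by
      intro l hlk
      simpa [hgdef, Function.update_self, hF] using hsum l hlk
    have hkey := wronskian_key n k hk g z₀ hgan 0 hg0
    intro l hl
    have hEq : (fun w => Matrix.det
        (Matrix.of fun i j : Fin (n + 1) => iteratedDeriv (i : ℕ) (f j) w)) =ᶠ[𝓝 z₀]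
        (fun w => Matrix.det
        (Matrix.of fun i j : Fin (n + 1) => iteratedDeriv (i : ℕ) (g j) w)) := by
      have hev : ∀ᶠ w in 𝓝 z₀, ∀ j, AnalyticAt ℂ (f j) w := by
        rw [Filter.eventually_all]
        exact fun j => (hf j).eventually_analyticAt
      filter_upwards [hev] with w hw
      have hcol : (Matrix.of fun i j : Fin (n + 1) => iteratedDeriv (i : ℕ) (g j) w)
          = Matrix.updateCol (Matrix.of fun i j : Fin (n + 1) => iteratedDeriv (i : ℕ) (f j) w)
            0 (fun i => ∑ j, iteratedDeriv (i : ℕ) (f j) w) := by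
        ext i j
        by_cases hj : j = 0
        · subst hj
          simp only [Matrix.updateCol_self, Matrix.of_apply, hgdef, Function.update_self]
          rw [hF]
          exact iteratedDeriv_sum_analytic _ _ (fun j _ => hw j) _
        · simp [Matrix.updateCol_ne hj, hgdef, Function.update_of_ne hj]
      rw [hcol]
      have := Matrix.det_updateCol_sum
        (Matrix.of fun i j : Fin (n + 1) => iteratedDeriv (i : ℕ) (f j) w) 0 (fun _ => (1 : ℂ))
      simpa using this.symm
    rw [hEq.iteratedDeriv_eq]
    exact hkey l hl
end
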